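/- Let $X_r$ and $v_s$ be vector fields on $\mathbb{C}^n$ whose components are homogeneous polynomials of degree $r+1$ and $s+1$ respectively, with polynomial norms $\|X_r\|$ and $\|v_s\|$ (sum of absolute values of coefficients of all components). Then the Lie bracket $L_{X_r} v_s$, whose $j$-th component is $\sum_{l=1}^n \left( X_{r,l}\,\partial v_{s,j}/\partial z_l - v_{s,l}\,\partial X_{r,j}/\partial z_l \right)$, satisfies $\|L_{X_r} v_s\| \le (r+s+2)\,\|X_r\|\,\|v_s\|$. -/

import Mathlib

open Finset

/-- The polynomial norm: sum of the absolute values of the coefficients. -/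
noncomputable def pnorm {n : ℕ} (f : MvPolynomial (Fin n) ℂ) : ℝ :=
  ∑ m ∈ f.support, ‖f.coeff m‖

/-- The polynomial norm of a vector field: sum of the norms of the components. -/
noncomputable def vnorm {n : ℕ} (X : Fin n → MvPolynomial (Fin n) ℂ) : ℝ :=
  ∑ j, pnorm (X j)

/-- The Lie bracket (commutator) of vector fields:
`(L_X v)_j = ∑ l, (X l * ∂_l v_j - v l * ∂_l X_j)`. -/
noncomputable def lieBr {n : ℕ} (X v : Fin n → MvPolynomial (Fin n) ℂ) :
    Fin n → MvPolynomial (Fin n) ℂ :=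
  fun j => ∑ l, (X l * MvPolynomial.pderiv l (v j) - v l * MvPolynomial.pderiv l (X j))

namespace LieAux

open MvPolynomial

lemma pnorm_eq_sum {n : ℕ} (f : MvPolynomial (Fin n) ℂ) {S : Finset ((Fin n) →₀ ℕ)}
    (h : f.support ⊆ S) : pnorm f = ∑ m ∈ S, ‖f.coeff m‖ :=
  Finset.sum_subset h (fun m _ hm => by
    simp [MvPolynomial.notMem_support_iff.mp hm])

lemma pnorm_nonneg {n : ℕ} (f : MvPolynomial (Fin n) ℂ) : 0 ≤ pnorm f :=
  Finset.sum_nonneg fun _ _ => norm_nonneg _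

lemma pnorm_add_le {n : ℕ} (f g : MvPolynomial (Fin n) ℂ) :
    pnorm (f + g) ≤ pnorm f + pnorm g := by
  classical
  rw [pnorm_eq_sum (f + g) (MvPolynomial.support_add),
    pnorm_eq_sum f (Finset.subset_union_left (s₂ := g.support)),
    pnorm_eq_sum g (Finset.subset_union_right (s₁ := f.support)), ← Finset.sum_add_distrib]
  exact Finset.sum_le_sum fun m _ => by simpa using norm_add_le (f.coeff m) (g.coeff m)

lemma pnorm_neg {n : ℕ} (f : MvPolynomial (Fin n) ℂ) : pnorm (-f) = pnorm f := by
  simp [pnorm]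

lemma pnorm_sub_le {n : ℕ} (f g : MvPolynomial (Fin n) ℂ) :
    pnorm (f - g) ≤ pnorm f + pnorm g := by
  rw [sub_eq_add_neg]
  simpa [pnorm_neg] using pnorm_add_le f (-g)

lemma pnorm_sum_le {n : ℕ} {ι : Type*} (s : Finset ι) (F : ι → MvPolynomial (Fin n) ℂ) :
    pnorm (∑ i ∈ s, F i) ≤ ∑ i ∈ s, pnorm (F i) := by
  classical
  induction s using Finset.induction_on with
  | empty => simp [pnorm]
  | insert _ _ h ih =>
    rw [Finset.sum_insert h, Finset.sum_insert h]
    exact (pnorm_add_le _ _).trans (by linarith)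

lemma pnorm_monomial_le {n : ℕ} (a : (Fin n) →₀ ℕ) (c : ℂ) :
    pnorm (MvPolynomial.monomial a c) ≤ ‖c‖ := by
  rcases eq_or_ne c 0 with rfl | hc
  · simp [pnorm]
  · simp [pnorm, MvPolynomial.support_monomial, hc, MvPolynomial.coeff_monomial]

lemma pnorm_monomial_mul {n : ℕ} (a : (Fin n) →₀ ℕ) (c : ℂ) (g : MvPolynomial (Fin n) ℂ) :
    pnorm (MvPolynomial.monomial a c * g) ≤ ‖c‖ * pnorm g := by
  classical
  have hsub : (MvPolynomial.monomial a c * g).support ⊆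
      g.support.map (addLeftEmbedding a) := by
    intro m hm
    have := MvPolynomial.support_mul _ _ hm
    rw [Finset.mem_add] at this
    obtain ⟨x, hx, y, hy, rfl⟩ := this
    have hxa : x = a := by
      have := MvPolynomial.support_monomial_subset hx
      simpa using this
    subst hxa
    exact Finset.mem_map.mpr ⟨y, hy, rfl⟩
  rw [pnorm_eq_sum _ hsub, Finset.sum_map]
  have : ∀ m ∈ g.support,
      ‖(MvPolynomial.monomial a c * g).coeff (addLeftEmbedding a m)‖ = ‖c‖ * ‖g.coeff m‖ := by
    intro m _
    have : addLeftEmbedding a m = a + m := rfl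
    rw [this, MvPolynomial.coeff_monomial_mul, norm_mul]
  rw [Finset.sum_congr rfl this, ← Finset.mul_sum]
  exact le_of_eq rfl

lemma pnorm_mul_le {n : ℕ} (f g : MvPolynomial (Fin n) ℂ) :
    pnorm (f * g) ≤ pnorm f * pnorm g := by
  classical
  conv_lhs => rw [f.as_sum, Finset.sum_mul]
  refine (pnorm_sum_le _ _).trans ?_
  rw [pnorm, Finset.sum_mul]
  exact Finset.sum_le_sum fun m _ => pnorm_monomial_mul m (f.coeff m) g

lemma pnorm_pderiv_le {n d : ℕ} (l : Fin n) (f : MvPolynomial (Fin n) ℂ)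
    (hf : f.IsHomogeneous d) :
    pnorm (MvPolynomial.pderiv l f) ≤ (d : ℝ) * pnorm f := by
  classical
  conv_lhs => rw [f.as_sum, map_sum]
  refine (pnorm_sum_le _ _).trans ?_
  rw [pnorm, Finset.mul_sum]
  refine Finset.sum_le_sum fun m hm => ?_
  rw [MvPolynomial.pderiv_monomial]
  refine (pnorm_monomial_le _ _).trans ?_
  rw [norm_mul, mul_comm]
  have hml : (m l : ℝ) ≤ (d : ℝ) := by
    have hdeg : m.degree = d := by
      have := hf (MvPolynomial.mem_support_iff.mp hm)
      rwa [Pi.one_def, ← Finsupp.degree_eq_weight_one] at this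
    exact_mod_cast hdeg ▸ Finsupp.le_degree l m
  have : ‖((m l : ℕ) : ℂ)‖ ≤ (d : ℝ) := by
    simpa using hml
  exact mul_le_mul_of_nonneg_right this (norm_nonneg _)

end LieAux

open LieAux MvPolynomial in
/-- if the components of `X` are homogeneous of degree `r+1` and those
of `v` are homogeneous of degree `s+1`, then `‖L_X v‖ ≤ (r+s+2) ‖X‖ ‖v‖`. -/
theorem lie_bracket_polynomial_norm_bound (n r s : ℕ)
    (X v : Fin n → MvPolynomial (Fin n) ℂ)
    (hX : ∀ j, (X j).IsHomogeneous (r + 1))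
    (hv : ∀ j, (v j).IsHomogeneous (s + 1)) :
    vnorm (lieBr X v) ≤ (r + s + 2 : ℝ) * vnorm X * vnorm v := by
  classical
  have key : ∀ j, pnorm (lieBr X v j) ≤
      ∑ l, ((s + 1 : ℝ) * pnorm (X l) * pnorm (v j) + (r + 1 : ℝ) * pnorm (v l) * pnorm (X j)) := by
    intro j
    refine (pnorm_sum_le _ _).trans (Finset.sum_le_sum fun l _ => ?_)
    refine (pnorm_sub_le _ _).trans ?_
    have h1 : pnorm (X l * pderiv l (v j)) ≤ (s + 1 : ℝ) * pnorm (X l) * pnorm (v j) := by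
      refine (pnorm_mul_le _ _).trans ?_
      have := pnorm_pderiv_le l (v j) (hv j)
      have h2 := mul_le_mul_of_nonneg_left this (pnorm_nonneg (X l))
      push_cast at h2 ⊢
      nlinarith [pnorm_nonneg (X l), pnorm_nonneg (v j)]
    have h2 : pnorm (v l * pderiv l (X j)) ≤ (r + 1 : ℝ) * pnorm (v l) * pnorm (X j) := by
      refine (pnorm_mul_le _ _).trans ?_
      have := pnorm_pderiv_le l (X j) (hX j)
      have h2 := mul_le_mul_of_nonneg_left this (pnorm_nonneg (v l))
      push_cast at h2 ⊢
      nlinarith [pnorm_nonneg (v l), pnorm_nonneg (X j)]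
    linarith
  calc vnorm (lieBr X v) ≤ ∑ j, ∑ l,
      ((s + 1 : ℝ) * pnorm (X l) * pnorm (v j) + (r + 1 : ℝ) * pnorm (v l) * pnorm (X j)) :=
        Finset.sum_le_sum fun j _ => key j
    _ = (s + 1 : ℝ) * vnorm X * vnorm v + (r + 1 : ℝ) * vnorm v * vnorm X := by
        have gen : ∀ (c : ℝ) (f g : Fin n → ℝ),
            ∑ j, ∑ l, c * f l * g j = c * (∑ l, f l) * (∑ j, g j) := by
          intro c f g
          calc ∑ j, ∑ l, c * f l * g j = ∑ j, (∑ l, c * f l) * g j := by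
                simp [Finset.sum_mul]
            _ = (∑ l, c * f l) * ∑ j, g j := by rw [← Finset.mul_sum]
            _ = c * (∑ l, f l) * (∑ j, g j) := by rw [← Finset.mul_sum]
        simp only [Finset.sum_add_distrib, vnorm]
        rw [gen (s+1 : ℝ) (fun l => pnorm (X l)) (fun j => pnorm (v j)),
          gen (r+1 : ℝ) (fun l => pnorm (v l)) (fun j => pnorm (X j))]
    _ = (r + s + 2 : ℝ) * vnorm X * vnorm v := by ring
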